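/- A function f : ℝ → ℝ satisfies f(x - f(x) + f(y)) = f(y) for all x, y ∈ ℝ with range of x ↦ x - f(x) equal to (-1,0] if and only if there exists a constant c ∈ ℝ such that f(x) = ⌈x - c⌉ + c for all x ∈ ℝ. -/

import Mathlib

theorem decomposer_Ioc_iff_shifted_ceil (f : ℝ → ℝ) :
    ((∀ x y : ℝ, f (x - f x + f y) = f y) ∧
      Set.range (fun x : ℝ => x - f x) = Set.Ioc (-1:ℝ) 0) ↔
    ∃ c : ℝ, ∀ x : ℝ, f x = (⌈x - c⌉ : ℝ) + c := by
  constructor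
  · rintro ⟨hfe, hr⟩
    -- every x satisfies x - f x ∈ (-1, 0]
    have h1 : ∀ x : ℝ, x - f x ∈ Set.Ioc (-1:ℝ) 0 := by
      intro x
      rw [← hr]
      exact ⟨x, rfl⟩
    -- shift invariance
    have h2 : ∀ t ∈ Set.Ioc (-1:ℝ) 0, ∀ y : ℝ, f (t + f y) = f y := by
      intro t ht y
      rw [← hr] at ht
      obtain ⟨x, hx⟩ := ht
      simp only at hx
      rw [← hx]
      exact hfe x y
    have hfix : ∀ y : ℝ, f (f y) = f y := by
      intro y
      have := h2 0 ⟨by norm_num, le_refl 0⟩ y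
      simpa using this
    -- key step lemma
    have hstep : ∀ x : ℝ, f (x + 1) = f x + 1 := by
      intro x
      set v := f x with hv
      have hxv := h1 x
      have hxv1 : x ≤ v := by linarith [hxv.2]
      have hxv2 : v < x + 1 := by linarith [hxv.1]
      set u := f (v + 1) with hu
      have huv := h1 (v + 1)
      have hu1 : v + 1 ≤ u := by linarith [huv.2]
      have hu2 : u < v + 2 := by linarith [huv.1]
      have hfv : f v = v := by rw [hv]; exact hfix x
      have huv1 : u = v + 1 := by
        set w := f (u - 1) with hw
        have hwm := h1 (u - 1)
        have hw1 : u - 1 ≤ w := by linarith [hwm.2]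
        have hw2 : w < u := by linarith [hwm.1]
        by_cases hwv : w = v
        · -- then u - 1 ≤ v, so u = v + 1
          linarith [hw1, hwv ▸ hw1]
        · exfalso
          have huv' : u - 1 > v := by
            rcases lt_or_eq_of_le (by linarith : v ≤ u - 1) with h | h
            · exact h
            · exact absurd (by rw [hw, ← h, hfv]) hwv
          by_cases hweq : w = u - 1
          · -- f(u-1) = u-1; then f(v) = u - 1 via shift
            have ht : v - (u-1) ∈ Set.Ioc (-1:ℝ) 0 := ⟨by linarith, by linarith⟩
            have := h2 (v - (u-1)) ht (u-1)
            rw [← hw, hweq] at this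
            have : f v = u - 1 := by
              have harg : v - (u-1) + (u-1) = v := by ring
              rwa [harg] at this
            rw [hfv] at this; linarith
          · have hwgt : w > u - 1 := lt_of_le_of_ne hw1 (Ne.symm hweq)
            -- f(w) = u via shift from y = v+1, and f(w) = w
            have ht : w - u ∈ Set.Ioc (-1:ℝ) 0 := ⟨by linarith, by linarith⟩
            have := h2 (w - u) ht (v + 1)
            rw [← hu] at this
            have harg : w - u + u = w := by ring
            rw [harg] at this
            have hfw : f w = w := by rw [hw]; exact hfix (u-1)
            rw [hfw] at this; linarith
      -- now f(x+1) = f((x-v) + f(v+1)) = f(v+1) = v+1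
      have := h2 (x - v) (h1 x) (v + 1)
      rw [← hu, huv1] at this
      have harg : x - v + (v + 1) = x + 1 := by ring
      rw [harg] at this
      rw [this]
    -- integer translation
    have hint : ∀ n : ℤ, ∀ x : ℝ, f (x + n) = f x + n := by
      intro n
      induction n using Int.induction_on with
      | zero => simp
      | succ n ih =>
        intro x
        have hs := hstep (x + (n:ℝ))
        have hi := ih x
        push_cast at hi ⊢
        rw [show x + ((n:ℝ)+1) = (x + (n:ℝ)) + 1 by ring, hs, hi]
        ring
      | pred n ih =>
        intro x
        have hs := hstep (x + (-(n:ℝ)-1))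
        have hi := ih x
        push_cast at hi ⊢
        rw [show x + (-(n:ℝ)-1) + 1 = x + -(n:ℝ) by ring] at hs
        linarith
    refine ⟨f 0, fun x => ?_⟩
    set c := f 0 with hc
    set n := ⌈x - c⌉ with hn
    have hfc : f c = c := hfix 0
    have hfcn : f (c + n) = c + n := by rw [hint n c, hfc]
    have hmem : x - (c + n) ∈ Set.Ioc (-1:ℝ) 0 := by
      constructor
      · have := Int.ceil_lt_add_one (x - c)
        rw [← hn] at this
        linarith
      · have := Int.le_ceil (x - c)
        rw [← hn] at this
        linarith
    have := h2 (x - (c + n)) hmem (c + n)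
    rw [hfcn] at this
    have harg : x - (c + n) + (c + n) = x := by ring
    rw [harg] at this
    rw [this]; ring
  · rintro ⟨c, hf⟩
    constructor
    · intro x y
      rw [hf x, hf y, hf]
      have harg : x - ((⌈x - c⌉:ℝ) + c) + ((⌈y - c⌉:ℝ) + c) - c
          = (x - c - ⌈x - c⌉) + (⌈y - c⌉ : ℤ) := by push_cast; ring
      rw [harg, Int.ceil_add_intCast]
      have : ⌈x - c - (⌈x - c⌉:ℝ)⌉ = 0 := by
        have : x - c - (⌈x - c⌉:ℝ) = (x - c) - (⌈x-c⌉ : ℤ) := by push_cast; ring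
        rw [this, Int.ceil_sub_intCast, sub_self]
      rw [this]
      push_cast; ring
    · ext r
      simp only [Set.mem_range, Set.mem_Ioc]
      constructor
      · rintro ⟨x, hx⟩
        rw [hf x] at hx
        have h1 := Int.ceil_lt_add_one (x - c)
        have h2 := Int.le_ceil (x - c)
        constructor <;> [linarith; linarith]
      · rintro ⟨hr1, hr2⟩
        refine ⟨r + c, ?_⟩
        rw [hf (r + c)]
        have : ⌈r + c - c⌉ = 0 := by
          rw [show r + c - c = r by ring]
          exact Int.ceil_eq_zero_iff.mpr ⟨hr1, hr2⟩
        rw [this]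
        push_cast; ring
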